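/- Suppose R > 0 and β ∈ ℂ. Let ψ : ℝ² → ℂ be a smooth function, not identically zero on Ω, with ψ = 0 and ∇ψ = 0 on ∂Ω, satisfying (1/R)·Δ²ψ = β·Δψ on Ω. Then β is real and β < 0. -/

import Mathlib

open MeasureTheory Complex

noncomputable section

/-- Partial derivative with respect to the first (x) variable. -/
def pdx (f : ℝ × ℝ → ℂ) : ℝ × ℝ → ℂ := fun p => deriv (fun x => f (x, p.2)) p.1

/-- Partial derivative with respect to the second (y) variable. -/
def pdy (f : ℝ × ℝ → ℂ) : ℝ × ℝ → ℂ := fun p => deriv (fun y => f (p.1, y)) p.2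

/-- The Laplacian Δf = f_xx + f_yy. -/
def lap (f : ℝ × ℝ → ℂ) : ℝ × ℝ → ℂ := fun p => pdx (pdx f) p + pdy (pdy f) p

/-- The open unit disk Ω. -/
def disk : Set (ℝ × ℝ) := {p | p.1 ^ 2 + p.2 ^ 2 < 1}

/-- The unit circle ∂Ω. -/
def bdry : Set (ℝ × ℝ) := {p | p.1 ^ 2 + p.2 ^ 2 = 1}

lemma hasDerivAt_slice_x (f : ℝ × ℝ → ℂ) (hf : Differentiable ℝ f) (p : ℝ × ℝ) :
    HasDerivAt (fun x => f (x, p.2)) (fderiv ℝ f p (1, 0)) p.1 := by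
  have h1 : HasDerivAt (fun x : ℝ => (x, p.2)) ((1 : ℝ), (0 : ℝ)) p.1 :=
    HasDerivAt.prodMk (hasDerivAt_id p.1) (hasDerivAt_const _ _)
  exact ((hf p).hasFDerivAt.comp_hasDerivAt p.1 h1)

lemma hasDerivAt_slice_y (f : ℝ × ℝ → ℂ) (hf : Differentiable ℝ f) (p : ℝ × ℝ) :
    HasDerivAt (fun y => f (p.1, y)) (fderiv ℝ f p (0, 1)) p.2 := by
  have h1 : HasDerivAt (fun y : ℝ => (p.1, y)) ((0 : ℝ), (1 : ℝ)) p.2 :=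
    HasDerivAt.prodMk (hasDerivAt_const _ _) (hasDerivAt_id p.2)
  exact ((hf p).hasFDerivAt.comp_hasDerivAt p.2 h1)

lemma pdx_eq (f : ℝ × ℝ → ℂ) (hf : Differentiable ℝ f) (p : ℝ × ℝ) :
    pdx f p = fderiv ℝ f p (1, 0) := (hasDerivAt_slice_x f hf p).deriv

lemma pdy_eq (f : ℝ × ℝ → ℂ) (hf : Differentiable ℝ f) (p : ℝ × ℝ) :
    pdy f p = fderiv ℝ f p (0, 1) := (hasDerivAt_slice_y f hf p).deriv

lemma contDiff_pdx {f : ℝ × ℝ → ℂ} (hf : ContDiff ℝ (⊤ : ℕ∞) f) :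
    ContDiff ℝ (⊤ : ℕ∞) (pdx f) := by
  have : pdx f = fun p => fderiv ℝ f p (1, 0) := by
    funext p; exact pdx_eq f (hf.differentiable (by simp)) p
  rw [this]
  exact (hf.fderiv_right (by simp)).clm_apply contDiff_const

lemma contDiff_pdy {f : ℝ × ℝ → ℂ} (hf : ContDiff ℝ (⊤ : ℕ∞) f) :
    ContDiff ℝ (⊤ : ℕ∞) (pdy f) := by
  have : pdy f = fun p => fderiv ℝ f p (0, 1) := by
    funext p; exact pdy_eq f (hf.differentiable (by simp)) p
  rw [this]
  exact (hf.fderiv_right (by simp)).clm_apply contDiff_const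

lemma contDiff_lap {f : ℝ × ℝ → ℂ} (hf : ContDiff ℝ (⊤ : ℕ∞) f) :
    ContDiff ℝ (⊤ : ℕ∞) (lap f) := (contDiff_pdx (contDiff_pdx hf)).add (contDiff_pdy (contDiff_pdy hf))

lemma pdx_mul {u v : ℝ × ℝ → ℂ} (hu : Differentiable ℝ u) (hv : Differentiable ℝ v)
    (p : ℝ × ℝ) :
    pdx (fun q => u q * v q) p = pdx u p * v p + u p * pdx v p := by
  have h := ((hasDerivAt_slice_x u hu p).mul (hasDerivAt_slice_x v hv p)).deriv
  rw [pdx, pdx_eq u hu p, pdx_eq v hv p]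
  exact h

lemma pdy_mul {u v : ℝ × ℝ → ℂ} (hu : Differentiable ℝ u) (hv : Differentiable ℝ v)
    (p : ℝ × ℝ) :
    pdy (fun q => u q * v q) p = pdy u p * v p + u p * pdy v p := by
  have h := ((hasDerivAt_slice_y u hu p).mul (hasDerivAt_slice_y v hv p)).deriv
  rw [pdy, pdy_eq u hu p, pdy_eq v hv p]
  exact h

lemma conj_smooth {f : ℝ × ℝ → ℂ} (hf : ContDiff ℝ (⊤ : ℕ∞) f) :
    ContDiff ℝ (⊤ : ℕ∞) (fun p => (starRingEnd ℂ) (f p)) := by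
  exact Complex.conjCLE.contDiff.comp hf

lemma pdx_conj {f : ℝ × ℝ → ℂ} (hf : Differentiable ℝ f) (p : ℝ × ℝ) :
    pdx (fun q => (starRingEnd ℂ) (f q)) p = (starRingEnd ℂ) (pdx f p) := by
  have h := (hasDerivAt_slice_x f hf p)
  have h2 : HasDerivAt (fun x => (starRingEnd ℂ) (f (x, p.2)))
      ((starRingEnd ℂ) (fderiv ℝ f p (1, 0))) p.1 := by
    exact (Complex.conjCLE.toContinuousLinearMap.hasFDerivAt.comp_hasDerivAt p.1 h)
  rw [pdx, h2.deriv, pdx_eq f hf p]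

lemma pdy_conj {f : ℝ × ℝ → ℂ} (hf : Differentiable ℝ f) (p : ℝ × ℝ) :
    pdy (fun q => (starRingEnd ℂ) (f q)) p = (starRingEnd ℂ) (pdy f p) := by
  have h := (hasDerivAt_slice_y f hf p)
  have h2 : HasDerivAt (fun y => (starRingEnd ℂ) (f (p.1, y)))
      ((starRingEnd ℂ) (fderiv ℝ f p (0, 1))) p.2 := by
    exact (Complex.conjCLE.toContinuousLinearMap.hasFDerivAt.comp_hasDerivAt p.2 h)
  rw [pdy, h2.deriv, pdy_eq f hf p]

lemma measurableSet_disk : MeasurableSet disk := by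
  have : IsOpen disk := by
    have : Continuous fun p : ℝ × ℝ => p.1 ^ 2 + p.2 ^ 2 := by fun_prop
    exact isOpen_lt this continuous_const
  exact this.measurableSet

lemma disk_subset_Icc : disk ⊆ Set.Icc ((-1, -1) : ℝ × ℝ) (1, 1) := by
  rintro ⟨x, y⟩ h
  simp only [disk, Set.mem_setOf_eq] at h
  constructor <;> constructor <;> simp <;> nlinarith [sq_nonneg x, sq_nonneg y]

lemma integrableOn_disk {f : ℝ × ℝ → ℂ} (hf : Continuous f) : IntegrableOn f disk := by
  exact (hf.continuousOn.integrableOn_compact isCompact_Icc).mono_set disk_subset_Icc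

lemma slice_eq_Ioo (x : ℝ) :
    {y : ℝ | x ^ 2 + y ^ 2 < 1} = Set.Ioo (-Real.sqrt (1 - x ^ 2)) (Real.sqrt (1 - x ^ 2)) := by
  ext y
  simp only [Set.mem_setOf_eq, Set.mem_Ioo]
  rw [← abs_lt, ← _root_.sq_abs y, Real.lt_sqrt (abs_nonneg y), _root_.sq_abs]
  constructor <;> intro h <;> linarith

lemma integral_pdy_zero {g : ℝ × ℝ → ℂ} (hg : ContDiff ℝ (⊤ : ℕ∞) g)
    (hb : ∀ p ∈ bdry, g p = 0) : ∫ p in disk, pdy g p = 0 := by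
  have hcont : Continuous (pdy g) := (contDiff_pdy hg).continuous
  have hint : Integrable (disk.indicator (pdy g)) :=
    (integrableOn_disk hcont).integrable_indicator measurableSet_disk
  rw [← integral_indicator measurableSet_disk]
  rw [MeasureTheory.Measure.volume_eq_prod] at hint ⊢
  rw [integral_prod _ hint]
  have hzero : ∀ x : ℝ, (∫ y : ℝ, disk.indicator (pdy g) (x, y)) = 0 := by
    intro x
    have hind : (fun y => disk.indicator (pdy g) (x, y)) =
        Set.indicator {y : ℝ | x ^ 2 + y ^ 2 < 1} (fun y => pdy g (x, y)) := by
      funext y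
      simp only [Set.indicator_apply, disk, Set.mem_setOf_eq]
    rw [hind, integral_indicator (by rw [slice_eq_Ioo]; exact measurableSet_Ioo)]
    set a := Real.sqrt (1 - x ^ 2) with ha
    rw [slice_eq_Ioo]
    rcases le_or_gt a 0 with h0 | h0
    · have : Set.Ioo (-a) a = ∅ := Set.Ioo_eq_empty (by linarith)
      rw [this]
      simp
    · have hx2 : 1 - x ^ 2 > 0 := Real.sqrt_pos.mp h0
      have ha2 : a ^ 2 = 1 - x ^ 2 := Real.sq_sqrt (by linarith)
      have hle : -a ≤ a := by linarith
      rw [← MeasureTheory.integral_Ioc_eq_integral_Ioo,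
        ← intervalIntegral.integral_of_le hle]
      have hder : ∀ y ∈ Set.uIcc (-a) a, DifferentiableAt ℝ (fun t => g (x, t)) y := by
        intro y _
        exact ((hg.differentiable (by simp)).comp
          ((differentiable_const x).prodMk differentiable_id)).differentiableAt
      have hpd : (fun y => pdy g (x, y)) = deriv (fun t => g (x, t)) := rfl
      have hci : IntervalIntegrable (deriv (fun t => g (x, t))) volume (-a) a := by
        rw [← hpd]
        exact (hcont.comp (by fun_prop)).intervalIntegrable _ _
      have := intervalIntegral.integral_deriv_eq_sub hder hci
      rw [hpd]
      rw [this]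
      have hb1 : g (x, a) = 0 := hb _ (by simp only [bdry, Set.mem_setOf_eq]; linarith)
      have hb2 : g (x, -a) = 0 := hb _ (by simp only [bdry, Set.mem_setOf_eq]; rw [neg_sq]; linarith)
      rw [hb1, hb2, sub_zero]
  rw [funext hzero]
  simp

lemma integral_pdx_zero {f : ℝ × ℝ → ℂ} (hf : ContDiff ℝ (⊤ : ℕ∞) f)
    (hb : ∀ p ∈ bdry, f p = 0) : ∫ p in disk, pdx f p = 0 := by
  set F : ℝ × ℝ → ℂ := f ∘ Prod.swap with hF
  have hFs : ContDiff ℝ (⊤ : ℕ∞) F := hf.comp (ContDiff.prodMk contDiff_snd contDiff_fst)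
  have hbF : ∀ p ∈ bdry, F p = 0 := by
    rintro ⟨x, y⟩ hp
    exact hb (y, x) (by simp only [bdry, Set.mem_setOf_eq] at hp ⊢; linarith)
  have key : (fun p : ℝ × ℝ => pdx f p) = fun p => pdy F (Prod.swap p) := rfl
  rw [key]
  have hswap : MeasurePreserving (Prod.swap : ℝ × ℝ → ℝ × ℝ) volume volume := by
    rw [MeasureTheory.Measure.volume_eq_prod]
    exact Measure.measurePreserving_swap
  have hpre : (Prod.swap : ℝ × ℝ → ℝ × ℝ) ⁻¹' disk = disk := by
    ext ⟨x, y⟩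
    simp only [Set.mem_preimage, disk, Set.mem_setOf_eq, Prod.swap]
    constructor <;> intro h <;> linarith
  have := hswap.setIntegral_preimage_emb
    (MeasurableEquiv.prodComm.measurableEmbedding) (pdy F) disk
  rw [← hpre]
  rw [this]
  exact integral_pdy_zero hFs hbF

lemma integral_div_zero {f g : ℝ × ℝ → ℂ} (hf : ContDiff ℝ (⊤ : ℕ∞) f)
    (hg : ContDiff ℝ (⊤ : ℕ∞) g) (hbf : ∀ p ∈ bdry, f p = 0)
    (hbg : ∀ p ∈ bdry, g p = 0) :
    ∫ p in disk, (pdx f p + pdy g p) = 0 := by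
  rw [integral_add (integrableOn_disk (contDiff_pdx hf).continuous)
    (integrableOn_disk (contDiff_pdy hg).continuous),
    integral_pdx_zero hf hbf, integral_pdy_zero hg hbg, add_zero]

lemma green2 {ψ : ℝ × ℝ → ℂ} (hψ : ContDiff ℝ (⊤ : ℕ∞) ψ)
    (hbc : ∀ p ∈ bdry, ψ p = 0 ∧ pdx ψ p = 0 ∧ pdy ψ p = 0) :
    ∫ p in disk, lap ψ p * (starRingEnd ℂ) (ψ p)
      = - ∫ p in disk, ((normSq (pdx ψ p) + normSq (pdy ψ p) : ℝ) : ℂ) := by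
  set φ : ℝ × ℝ → ℂ := fun q => (starRingEnd ℂ) (ψ q) with hφ
  have hφs : ContDiff ℝ (⊤ : ℕ∞) φ := conj_smooth hψ
  have hφd : Differentiable ℝ φ := hφs.differentiable (by simp)
  have hψd : Differentiable ℝ ψ := hψ.differentiable (by simp)
  have hxd : Differentiable ℝ (pdx ψ) := (contDiff_pdx hψ).differentiable (by simp)
  have hyd : Differentiable ℝ (pdy ψ) := (contDiff_pdy hψ).differentiable (by simp)
  have hpt : ∀ p, pdx (fun q => pdx ψ q * φ q) p + pdy (fun q => pdy ψ q * φ q) p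
      = lap ψ p * φ p + ((normSq (pdx ψ p) + normSq (pdy ψ p) : ℝ) : ℂ) := by
    intro p
    rw [pdx_mul hxd hφd, pdy_mul hyd hφd]
    have e1 : pdx φ p = (starRingEnd ℂ) (pdx ψ p) := pdx_conj hψd p
    have e2 : pdy φ p = (starRingEnd ℂ) (pdy ψ p) := pdy_conj hψd p
    rw [e1, e2, Complex.mul_conj, Complex.mul_conj, lap]
    push_cast
    ring
  have hI := integral_div_zero
    (f := fun q => pdx ψ q * φ q) (g := fun q => pdy ψ q * φ q)
    ((contDiff_pdx hψ).mul hφs) ((contDiff_pdy hψ).mul hφs)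
    (fun p hp => by simp [hφ, (hbc p hp).1])
    (fun p hp => by simp [hφ, (hbc p hp).1])
  rw [funext hpt] at hI
  have hintA : IntegrableOn (fun p => lap ψ p * φ p) disk :=
    integrableOn_disk ((contDiff_lap hψ).continuous.mul hφs.continuous)
  have hintB : IntegrableOn
      (fun p => ((normSq (pdx ψ p) + normSq (pdy ψ p) : ℝ) : ℂ)) disk := by
    apply integrableOn_disk
    exact Complex.continuous_ofReal.comp
      ((Complex.continuous_normSq.comp hxd.continuous).add
        (Complex.continuous_normSq.comp hyd.continuous))
  rw [integral_add hintA hintB] at hI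
  linear_combination hI

lemma pdx_sub {u v : ℝ × ℝ → ℂ} (hu : Differentiable ℝ u) (hv : Differentiable ℝ v)
    (p : ℝ × ℝ) : pdx (fun q => u q - v q) p = pdx u p - pdx v p := by
  have h := ((hasDerivAt_slice_x u hu p).sub (hasDerivAt_slice_x v hv p)).deriv
  rw [pdx, pdx_eq u hu p, pdx_eq v hv p]
  exact h

lemma pdy_sub {u v : ℝ × ℝ → ℂ} (hu : Differentiable ℝ u) (hv : Differentiable ℝ v)
    (p : ℝ × ℝ) : pdy (fun q => u q - v q) p = pdy u p - pdy v p := by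
  have h := ((hasDerivAt_slice_y u hu p).sub (hasDerivAt_slice_y v hv p)).deriv
  rw [pdy, pdy_eq u hu p, pdy_eq v hv p]
  exact h

lemma green1 {ψ : ℝ × ℝ → ℂ} (hψ : ContDiff ℝ (⊤ : ℕ∞) ψ)
    (hbc : ∀ p ∈ bdry, ψ p = 0 ∧ pdx ψ p = 0 ∧ pdy ψ p = 0) :
    ∫ p in disk, lap (lap ψ) p * (starRingEnd ℂ) (ψ p)
      = ∫ p in disk, ((normSq (lap ψ p) : ℝ) : ℂ) := by
  set φ : ℝ × ℝ → ℂ := fun q => (starRingEnd ℂ) (ψ q) with hφ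
  set L : ℝ × ℝ → ℂ := lap ψ with hL
  have hψd : Differentiable ℝ ψ := hψ.differentiable (by simp)
  have hφs : ContDiff ℝ (⊤ : ℕ∞) φ := conj_smooth hψ
  have hφd : Differentiable ℝ φ := hφs.differentiable (by simp)
  have hLs : ContDiff ℝ (⊤ : ℕ∞) L := contDiff_lap hψ
  have hLd : Differentiable ℝ L := hLs.differentiable (by simp)
  have hpxL : ContDiff ℝ (⊤ : ℕ∞) (pdx L) := contDiff_pdx hLs
  have hpyL : ContDiff ℝ (⊤ : ℕ∞) (pdy L) := contDiff_pdy hLs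
  -- pdx φ and pdy φ as conjugates
  have hpxφ : pdx φ = fun q => (starRingEnd ℂ) (pdx ψ q) := funext (pdx_conj hψd)
  have hpyφ : pdy φ = fun q => (starRingEnd ℂ) (pdy ψ q) := funext (pdy_conj hψd)
  have hpxφs : ContDiff ℝ (⊤ : ℕ∞) (pdx φ) := contDiff_pdx hφs
  have hpyφs : ContDiff ℝ (⊤ : ℕ∞) (pdy φ) := contDiff_pdy hφs
  have hlapφ : ∀ p, pdx (pdx φ) p + pdy (pdy φ) p = (starRingEnd ℂ) (L p) := by
    intro p
    rw [hpxφ, hpyφ, pdx_conj ((contDiff_pdx hψ).differentiable (by simp)),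
      pdy_conj ((contDiff_pdy hψ).differentiable (by simp)), ← map_add]
    rfl
  have hpt : ∀ p,
      pdx (fun q => pdx L q * φ q - L q * pdx φ q) p
        + pdy (fun q => pdy L q * φ q - L q * pdy φ q) p
      = lap L p * φ p - ((normSq (L p) : ℝ) : ℂ) := by
    intro p
    rw [pdx_sub ((hpxL.mul hφs).differentiable (by simp))
        ((hLs.mul hpxφs).differentiable (by simp)),
      pdy_sub ((hpyL.mul hφs).differentiable (by simp))
        ((hLs.mul hpyφs).differentiable (by simp)),
      pdx_mul (hpxL.differentiable (by simp)) hφd,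
      pdx_mul hLd (hpxφs.differentiable (by simp)),
      pdy_mul (hpyL.differentiable (by simp)) hφd,
      pdy_mul hLd (hpyφs.differentiable (by simp))]
    have e := hlapφ p
    have : lap L p = pdx (pdx L) p + pdy (pdy L) p := rfl
    rw [this]
    have e2 : L p * (pdx (pdx φ) p + pdy (pdy φ) p) = L p * (starRingEnd ℂ) (L p) := by
      rw [e]
    rw [Complex.mul_conj] at e2
    have expand : L p * pdx (pdx φ) p + L p * pdy (pdy φ) p = ((normSq (L p) : ℝ) : ℂ) := by
      rw [← mul_add, e2]
    linear_combination -expand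
  have hI := integral_div_zero
    (f := fun q => pdx L q * φ q - L q * pdx φ q)
    (g := fun q => pdy L q * φ q - L q * pdy φ q)
    ((hpxL.mul hφs).sub (hLs.mul hpxφs)) ((hpyL.mul hφs).sub (hLs.mul hpyφs))
    (fun p hp => by
      rw [hpxφ]
      simp [hφ, (hbc p hp).1, (hbc p hp).2.1])
    (fun p hp => by
      rw [hpyφ]
      simp [hφ, (hbc p hp).1, (hbc p hp).2.2])
  rw [funext hpt] at hI
  have hintA : IntegrableOn (fun p => lap L p * φ p) disk :=
    integrableOn_disk ((contDiff_lap hLs).continuous.mul hφs.continuous)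
  have hintB : IntegrableOn (fun p => ((normSq (L p) : ℝ) : ℂ)) disk := by
    apply integrableOn_disk
    exact Complex.continuous_ofReal.comp (Complex.continuous_normSq.comp hLd.continuous)
  rw [integral_sub hintA hintB] at hI
  linear_combination hI

lemma integrableOn_disk' {f : ℝ × ℝ → ℝ} (hf : Continuous f) : IntegrableOn f disk :=
  (hf.continuousOn.integrableOn_compact isCompact_Icc).mono_set disk_subset_Icc

lemma isOpen_disk : IsOpen disk := by
  have : Continuous fun p : ℝ × ℝ => p.1 ^ 2 + p.2 ^ 2 := by fun_prop
  exact isOpen_lt this continuous_const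

lemma eq_zero_on_disk {h : ℝ × ℝ → ℝ} (hc : Continuous h) (hnn : ∀ p, 0 ≤ h p)
    (hI : ∫ p in disk, h p = 0) : ∀ p ∈ disk, h p = 0 := by
  intro p₀ hp₀
  by_contra hne
  have hpos : 0 < h p₀ := lt_of_le_of_ne (hnn p₀) (Ne.symm hne)
  have hU : IsOpen ({p | 0 < h p} ∩ disk) :=
    (isOpen_lt continuous_const hc).inter isOpen_disk
  have hUne : ({p | 0 < h p} ∩ disk).Nonempty := ⟨p₀, hpos, hp₀⟩
  have hμ : 0 < volume ({p | 0 < h p} ∩ disk) := hU.measure_pos volume hUne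
  have hsub : {p | 0 < h p} ∩ disk ⊆ Function.support h ∩ disk := by
    rintro q ⟨h1, h2⟩
    exact ⟨ne_of_gt h1, h2⟩
  have hμ2 : 0 < volume (Function.support h ∩ disk) :=
    lt_of_lt_of_le hμ (measure_mono hsub)
  have := (setIntegral_pos_iff_support_of_nonneg_ae
    (Filter.Eventually.of_forall fun p => hnn p : 0 ≤ᵐ[volume.restrict disk] h)
    (integrableOn_disk' hc)).mpr hμ2
  rw [hI] at this
  exact lt_irrefl 0 this

lemma convex_disk : Convex ℝ disk := by
  rintro ⟨x1, y1⟩ hp ⟨x2, y2⟩ hq a b ha hb hab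
  simp only [disk, Set.mem_setOf_eq] at hp hq ⊢
  simp only [Prod.fst_add, Prod.snd_add, Prod.smul_fst, Prod.smul_snd, smul_eq_mul]
  have hh : (a + b) ^ 2 = 1 := by rw [hab]; ring
  have t1 : 0 ≤ a*b*((x1-x2)^2+(y1-y2)^2) :=
    mul_nonneg (mul_nonneg ha hb) (by positivity)
  have t2 : 0 ≤ a*b*(2 - (x1^2+y1^2) - (x2^2+y2^2)) :=
    mul_nonneg (mul_nonneg ha hb) (by linarith)
  have t3 : 0 ≤ a*a*(1-(x1^2+y1^2)) := mul_nonneg (mul_self_nonneg a) (by linarith)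
  have t4 : 0 ≤ b*b*(1-(x2^2+y2^2)) := mul_nonneg (mul_self_nonneg b) (by linarith)
  have t5 : 0 < a*a + b*b := by nlinarith [sq_nonneg (a - b), sq_nonneg (a + b)]
  rcases lt_or_ge (a*a*(1-(x1^2+y1^2)) + b*b*(1-(x2^2+y2^2))) 0 with hneg | hpos
  · linarith
  · have strict : 0 < a*a*(1-(x1^2+y1^2)) + b*b*(1-(x2^2+y2^2)) := by
      rcases (mul_self_nonneg a).lt_or_eq with haa | haa
      · nlinarith [mul_pos haa (by linarith : (0:ℝ) < 1-(x1^2+y1^2))]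
      · have hbb : 0 < b * b := by nlinarith
        nlinarith [mul_pos hbb (by linarith : (0:ℝ) < 1-(x2^2+y2^2))]
    nlinarith [t1, t2, strict, hh]

lemma const_on_disk {ψ : ℝ × ℝ → ℂ} (hψ : ContDiff ℝ (⊤ : ℕ∞) ψ)
    (hx : ∀ p ∈ disk, pdx ψ p = 0) (hy : ∀ p ∈ disk, pdy ψ p = 0)
    {p q : ℝ × ℝ} (hp : p ∈ disk) (hq : q ∈ disk) : ψ p = ψ q := by
  have hψd : Differentiable ℝ ψ := hψ.differentiable (by simp)
  apply convex_disk.is_const_of_fderivWithin_eq_zero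
    (hψd.differentiableOn) _ hp hq
  intro z hz
  rw [fderivWithin_of_isOpen isOpen_disk hz]
  refine ContinuousLinearMap.ext fun v => ?_
  have hv : (v : ℝ × ℝ) = v.1 • ((1 : ℝ), (0 : ℝ)) + v.2 • ((0 : ℝ), (1 : ℝ)) := by
      simp [Prod.ext_iff]
  rw [hv, map_add, _root_.map_smul, _root_.map_smul, ← pdx_eq ψ hψd z, ← pdy_eq ψ hψd z,
    hx z hz, hy z hz]
  simp

lemma const_is_zero {ψ : ℝ × ℝ → ℂ} (hψc : Continuous ψ)
    (hconst : ∀ p ∈ disk, ψ p = ψ (0, 0)) (hb : ψ (1, 0) = 0) :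
    ∀ p ∈ disk, ψ p = 0 := by
  set u : ℝ → ℂ := fun t => ψ (t, 0) with hu
  have huc : Continuous u := hψc.comp (by fun_prop)
  have hev : ∀ t ∈ Set.Ioo (0 : ℝ) 1, u t = ψ (0, 0) := by
    intro t ht
    exact hconst (t, 0) (by simp only [disk, Set.mem_setOf_eq]; nlinarith [ht.1, ht.2])
  have h1 : Filter.Tendsto u (nhdsWithin 1 (Set.Iio 1)) (nhds (u 1)) :=
    (huc.continuousAt).continuousWithinAt
  have h2 : Filter.Tendsto u (nhdsWithin 1 (Set.Iio 1)) (nhds (ψ (0, 0))) := by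
    apply Filter.Tendsto.congr' _ tendsto_const_nhds
    filter_upwards [Ioo_mem_nhdsLT_of_mem (by constructor <;> norm_num :
      (1 : ℝ) ∈ Set.Ioc 0 1)] with t ht
    exact (hev t ht).symm
  have hc : u 1 = ψ (0, 0) := tendsto_nhds_unique h1 h2
  have : ψ (0, 0) = 0 := by rw [← hc]; exact hb
  intro p hp
  rw [hconst p hp, this]

/-- Newtonian case (ε = 0): every eigenvalue of the stream-function problem
`(1/R)Δ²ψ = βΔψ` with clamped boundary conditions is real and negative. -/
theorem newtonian_eigenvalues_negative (R : ℝ) (hR : 0 < R) (β : ℂ)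
    (ψ : ℝ × ℝ → ℂ) (hψ : ContDiff ℝ (⊤ : ℕ∞) ψ)
    (hnz : ¬ ∀ p ∈ disk, ψ p = 0)
    (hbc : ∀ p ∈ bdry, ψ p = 0 ∧ pdx ψ p = 0 ∧ pdy ψ p = 0)
    (heq : ∀ p ∈ disk, (1 / (R : ℂ)) * lap (lap ψ) p = β * lap ψ p) :
    β.im = 0 ∧ β.re < 0 := by
  have hψd : Differentiable ℝ ψ := hψ.differentiable (by simp)
  have hLs : ContDiff ℝ (⊤ : ℕ∞) (lap ψ) := contDiff_lap hψ
  set Ar : ℝ := ∫ p in disk, normSq (lap ψ p) with hAr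
  set Br : ℝ := ∫ p in disk, (normSq (pdx ψ p) + normSq (pdy ψ p)) with hBr
  have hG1 : ∫ p in disk, lap (lap ψ) p * (starRingEnd ℂ) (ψ p) = (Ar : ℂ) := by
    rw [green1 hψ hbc]; exact integral_ofReal
  have hG2 : ∫ p in disk, lap ψ p * (starRingEnd ℂ) (ψ p) = -(Br : ℂ) := by
    rw [green2 hψ hbc]; exact congrArg Neg.neg integral_ofReal
  have hEq : (1 / (R : ℂ)) * (Ar : ℂ) = β * (-(Br : ℂ)) := by
    have h1 : ∫ p in disk, (1 / (R : ℂ)) * (lap (lap ψ) p * (starRingEnd ℂ) (ψ p))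
        = ∫ p in disk, β * (lap ψ p * (starRingEnd ℂ) (ψ p)) := by
      apply setIntegral_congr_fun measurableSet_disk
      intro p hp
      simp only
      rw [← mul_assoc, ← mul_assoc, heq p hp]
    rw [integral_const_mul, integral_const_mul, hG1, hG2] at h1
    exact h1
  have hAnn : 0 ≤ Ar := setIntegral_nonneg measurableSet_disk fun p _ => normSq_nonneg _
  have hBnn : 0 ≤ Br := setIntegral_nonneg measurableSet_disk
    fun p _ => add_nonneg (normSq_nonneg _) (normSq_nonneg _)
  have hBpos : 0 < Br := by
    rcases hBnn.lt_or_eq with h | h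
    · exact h
    · exfalso
      have hz := eq_zero_on_disk
        (h := fun p => normSq (pdx ψ p) + normSq (pdy ψ p))
        (by exact (Complex.continuous_normSq.comp (contDiff_pdx hψ).continuous).add (Complex.continuous_normSq.comp (contDiff_pdy hψ).continuous))
        (fun p => add_nonneg (normSq_nonneg _) (normSq_nonneg _)) h.symm
      have hx0 : ∀ p ∈ disk, pdx ψ p = 0 := by
        intro p hp
        have h1 : normSq (pdx ψ p) = 0 := by
          have := normSq_nonneg (pdx ψ p); have := normSq_nonneg (pdy ψ p)
          have hzp : normSq (pdx ψ p) + normSq (pdy ψ p) = 0 := hz p hp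
          linarith
        exact normSq_eq_zero.mp h1
      have hy0 : ∀ p ∈ disk, pdy ψ p = 0 := by
        intro p hp
        have h1 : normSq (pdy ψ p) = 0 := by
          have := normSq_nonneg (pdx ψ p); have := normSq_nonneg (pdy ψ p)
          have hzp : normSq (pdx ψ p) + normSq (pdy ψ p) = 0 := hz p hp
          linarith
        exact normSq_eq_zero.mp h1
      have hconst : ∀ p ∈ disk, ψ p = ψ (0, 0) := fun p hp =>
        const_on_disk hψ hx0 hy0 hp (by simp [disk])
      have hb10 : ψ (1, 0) = 0 := (hbc (1, 0) (by simp [bdry])).1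
      exact hnz (const_is_zero hψ.continuous hconst hb10)
  have hApos : 0 < Ar := by
    rcases hAnn.lt_or_eq with h | h
    · exact h
    · exfalso
      have hz := eq_zero_on_disk (h := fun p => normSq (lap ψ p))
        (by exact Complex.continuous_normSq.comp hLs.continuous) (fun p => normSq_nonneg _) h.symm
      have hL0 : ∀ p ∈ disk, lap ψ p * (starRingEnd ℂ) (ψ p) = 0 := by
        intro p hp
        have : lap ψ p = 0 := normSq_eq_zero.mp (hz p hp)
        rw [this, zero_mul]
      have : ∫ p in disk, lap ψ p * (starRingEnd ℂ) (ψ p) = 0 := by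
        rw [setIntegral_congr_fun measurableSet_disk hL0, integral_zero]
      rw [hG2] at this
      have hB0 : Br = 0 := by
        have := neg_eq_zero.mp this
        exact_mod_cast this
      linarith
  have hRne : (R : ℂ) ≠ 0 := ofReal_ne_zero.mpr (ne_of_gt hR)
  have hBne : (Br : ℂ) ≠ 0 := ofReal_ne_zero.mpr (ne_of_gt hBpos)
  have hβ : β = ((-(Ar / (R * Br)) : ℝ) : ℂ) := by
    push_cast
    field_simp [hRne, hBne] at hEq ⊢
    linear_combination hEq
  constructor
  · rw [hβ, Complex.ofReal_im]
  · rw [hβ]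
    simp only [Complex.ofReal_re]
    exact neg_lt_zero.mpr (div_pos hApos (mul_pos hR hBpos))
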